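/- Two elements (g_1,…,g_n,π) and (f_1,…,f_n,τ) of the wreath product G≀S_n are conjugate if and only if they have the same type, i.e., for every conjugacy class C of G, the multiset of lengths of cycles of π whose cycle product lies in C equals the multiset of lengths of cycles of τ whose cycle product lies in C. -/

import Mathlib

/-- The action of `Equiv.Perm (Fin n)` on `Fin n → G` by permuting coordinates. -/
def wreathHom (G : Type*) [Group G] (n : ℕ) : Equiv.Perm (Fin n) →* MulAut (Fin n → G) where
  toFun π := MulEquiv.arrowCongr π (MulEquiv.refl G)
  map_one' := by ext f i; rfl
  map_mul' := by intro π σ; ext f i; rfl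

/-- The wreath product `G ≀ Sₙ`. -/
abbrev WreathProduct (G : Type*) [Group G] (n : ℕ) :=
  SemidirectProduct (Fin n → G) (Equiv.Perm (Fin n)) (wreathHom G n)

/-- The cycle product of `h = (g₁,…,gₙ,π) ∈ G≀Sₙ` along the cycle of `π` through `i`:
if the cycle through `i = i₁` is `(i₁,…,i_k)` (so `i_j = π^{j-1} i`), this is
`g_{i_k} g_{i_{k-1}} ⋯ g_{i₁}`. -/
noncomputable def cycleProd {G : Type*} [Group G] {n : ℕ} (h : WreathProduct G n) (i : Fin n) : G :=
  (((List.range (Function.minimalPeriod (⇑h.right) i)).map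
      fun j => h.left ((h.right ^ j) i)).reverse).prod

/- The type of an element `h ∈ G≀Sₙ`: to each conjugacy class `C` of `G` it assigns the
multiset of lengths of the cycles of the permutation part of `h` whose cycle product lies
in `C`.  (Each cycle is counted exactly once, via its minimal element.) -/
open Classical in
noncomputable def wrType {G : Type*} [Group G] {n : ℕ} (h : WreathProduct G n) :
    ConjClasses G → Multiset ℕ := fun C =>
  ((Finset.univ.filter fun i : Fin n =>
      (∀ k : ℕ, i ≤ (h.right ^ k) i) ∧ ConjClasses.mk (cycleProd h i) = C).val).map
    fun i => Function.minimalPeriod (⇑h.right) i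


namespace WrC
variable {n : ℕ}


lemma perm_periodic (ρ : Equiv.Perm (Fin n)) (i : Fin n) : i ∈ Function.periodicPts ⇑ρ := by
  refine ⟨orderOf ρ, orderOf_pos ρ, ?_⟩
  show (⇑ρ)^[orderOf ρ] i = i
  rw [Equiv.Perm.iterate_eq_pow, pow_orderOf_eq_one]; rfl

lemma per_pos (ρ : Equiv.Perm (Fin n)) (i : Fin n) : 0 < Function.minimalPeriod ⇑ρ i :=
  Function.minimalPeriod_pos_of_mem_periodicPts (perm_periodic ρ i)

lemma pow_per (ρ : Equiv.Perm (Fin n)) (i : Fin n) :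
    (ρ ^ Function.minimalPeriod ⇑ρ i) i = i :=
  Function.isPeriodicPt_minimalPeriod ⇑ρ i

lemma pow_eq_pow_iff_mod (ρ : Equiv.Perm (Fin n)) (i : Fin n) {a b : ℕ} :
    (ρ ^ a) i = (ρ ^ b) i ↔
      a % Function.minimalPeriod ⇑ρ i = b % Function.minimalPeriod ⇑ρ i := by
  constructor
  · intro h
    have h' : (⇑ρ)^[a % Function.minimalPeriod ⇑ρ i] i
        = (⇑ρ)^[b % Function.minimalPeriod ⇑ρ i] i := by
      rw [Function.iterate_mod_minimalPeriod_eq, Function.iterate_mod_minimalPeriod_eq]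
      exact h
    exact Function.iterate_injOn_Iio_minimalPeriod
      (Set.mem_Iio.2 (Nat.mod_lt _ (per_pos ρ i)))
      (Set.mem_Iio.2 (Nat.mod_lt _ (per_pos ρ i))) h'
  · intro h
    show (⇑ρ)^[a] i = (⇑ρ)^[b] i
    rw [← Function.iterate_mod_minimalPeriod_eq, h, Function.iterate_mod_minimalPeriod_eq]

lemma per_pow_apply (ρ : Equiv.Perm (Fin n)) (i : Fin n) (m : ℕ) :
    Function.minimalPeriod ⇑ρ ((ρ ^ m) i) = Function.minimalPeriod ⇑ρ i :=
  Function.minimalPeriod_apply_iterate (perm_periodic ρ i) m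

open Classical in
noncomputable def orbitF (ρ : Equiv.Perm (Fin n)) (i : Fin n) : Finset (Fin n) :=
  Finset.univ.filter (fun j => ∃ m : ℕ, (ρ ^ m) i = j)

open Classical in
lemma mem_orbitF {ρ : Equiv.Perm (Fin n)} {i j : Fin n} :
    j ∈ orbitF ρ i ↔ ∃ m : ℕ, (ρ ^ m) i = j := by
  simp [orbitF]

lemma self_mem_orbitF (ρ : Equiv.Perm (Fin n)) (i : Fin n) : i ∈ orbitF ρ i :=
  mem_orbitF.2 ⟨0, rfl⟩

lemma sub_mod_lemma {k m : ℕ} (hk : 0 < k) : (k - m % k + m) % k = 0 % k := by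
  have h1 : m % k < k := Nat.mod_lt _ hk
  rw [Nat.add_mod]
  rcases Nat.eq_zero_or_pos (m % k) with h | h
  · simp [h]
  · have e1 : (k - m % k) % k = k - m % k := Nat.mod_eq_of_lt (by omega)
    rw [e1, Nat.sub_add_cancel h1.le, Nat.mod_self]
    simp

lemma orbit_symm {ρ : Equiv.Perm (Fin n)} {i j : Fin n} (h : ∃ m : ℕ, (ρ ^ m) i = j) :
    ∃ m : ℕ, (ρ ^ m) j = i := by
  obtain ⟨m, hm⟩ := h
  refine ⟨Function.minimalPeriod ⇑ρ i - m % Function.minimalPeriod ⇑ρ i, ?_⟩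
  rw [← hm, ← Equiv.Perm.mul_apply, ← pow_add]
  have := (pow_eq_pow_iff_mod ρ i).2 (sub_mod_lemma (m := m) (per_pos ρ i))
  simpa using this

lemma orbitF_eq_of_mem {ρ : Equiv.Perm (Fin n)} {i j : Fin n} (h : j ∈ orbitF ρ i) :
    orbitF ρ j = orbitF ρ i := by
  obtain ⟨m, hm⟩ := mem_orbitF.1 h
  ext p
  simp only [mem_orbitF]
  constructor
  · rintro ⟨a, ha⟩
    exact ⟨a + m, by rw [pow_add, Equiv.Perm.mul_apply, hm, ha]⟩
  · rintro ⟨a, ha⟩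
    obtain ⟨b, hb⟩ := orbit_symm ⟨m, hm⟩
    exact ⟨a + b, by rw [pow_add, Equiv.Perm.mul_apply, hb, ha]⟩

noncomputable def repPt (ρ : Equiv.Perm (Fin n)) (i : Fin n) : Fin n :=
  (orbitF ρ i).min' ⟨i, self_mem_orbitF ρ i⟩

lemma repPt_mem (ρ : Equiv.Perm (Fin n)) (i : Fin n) : repPt ρ i ∈ orbitF ρ i :=
  Finset.min'_mem _ _

lemma repPt_le {ρ : Equiv.Perm (Fin n)} {i j : Fin n} (h : j ∈ orbitF ρ i) : repPt ρ i ≤ j :=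
  Finset.min'_le _ _ h

lemma repPt_eq_of_mem {ρ : Equiv.Perm (Fin n)} {i j : Fin n} (h : j ∈ orbitF ρ i) :
    repPt ρ j = repPt ρ i := by
  unfold repPt; congr 1; exact orbitF_eq_of_mem h

lemma repPt_pow (ρ : Equiv.Perm (Fin n)) (i : Fin n) (m : ℕ) :
    repPt ρ ((ρ ^ m) i) = repPt ρ i :=
  repPt_eq_of_mem (mem_orbitF.2 ⟨m, rfl⟩)

lemma exists_pow_repPt (ρ : Equiv.Perm (Fin n)) (i : Fin n) :
    ∃ m : ℕ, (ρ ^ m) (repPt ρ i) = i :=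
  orbit_symm (mem_orbitF.1 (repPt_mem ρ i))

lemma per_repPt (ρ : Equiv.Perm (Fin n)) (i : Fin n) :
    Function.minimalPeriod ⇑ρ (repPt ρ i) = Function.minimalPeriod ⇑ρ i := by
  obtain ⟨m, hm⟩ := mem_orbitF.1 (repPt_mem ρ i)
  rw [← hm, per_pow_apply]

lemma isRep_iff (ρ : Equiv.Perm (Fin n)) (i : Fin n) :
    (∀ k : ℕ, i ≤ (ρ ^ k) i) ↔ repPt ρ i = i := by
  constructor
  · intro h
    obtain ⟨m, hm⟩ := mem_orbitF.1 (repPt_mem ρ i)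
    exact le_antisymm (repPt_le (self_mem_orbitF ρ i)) (hm ▸ h m)
  · intro h k
    nth_rewrite 1 [← h]
    exact repPt_le (mem_orbitF.2 ⟨k, rfl⟩)

lemma isRep_repPt (ρ : Equiv.Perm (Fin n)) (i : Fin n) :
    ∀ k : ℕ, repPt ρ i ≤ (ρ ^ k) (repPt ρ i) := by
  rw [isRep_iff, repPt_eq_of_mem (repPt_mem ρ i)]

noncomputable def idx (ρ : Equiv.Perm (Fin n)) (i : Fin n) : ℕ :=
  Nat.find (exists_pow_repPt ρ i)

lemma idx_spec (ρ : Equiv.Perm (Fin n)) (i : Fin n) : (ρ ^ idx ρ i) (repPt ρ i) = i :=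
  Nat.find_spec (exists_pow_repPt ρ i)

lemma idx_lt (ρ : Equiv.Perm (Fin n)) (i : Fin n) :
    idx ρ i < Function.minimalPeriod ⇑ρ i := by
  obtain ⟨m, hm⟩ := exists_pow_repPt ρ i
  set r := repPt ρ i with hr
  have hmod : (ρ ^ (m % Function.minimalPeriod ⇑ρ r)) r = i := by
    rw [← hm]
    exact (pow_eq_pow_iff_mod ρ r).2 (Nat.mod_mod_of_dvd m dvd_rfl)
  calc idx ρ i ≤ m % Function.minimalPeriod ⇑ρ r := Nat.find_le hmod
    _ < Function.minimalPeriod ⇑ρ r := Nat.mod_lt _ (per_pos ρ _)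
    _ = _ := hr ▸ per_repPt ρ i

end WrC

section Products
variable {G : Type*} [Group G] {n : ℕ}

noncomputable def prodAlong (h : WreathProduct G n) (i : Fin n) (m : ℕ) : G :=
  (((List.range m).map fun j => h.left ((h.right ^ j) i)).reverse).prod

@[simp] lemma prodAlong_zero (h : WreathProduct G n) (i : Fin n) : prodAlong h i 0 = 1 := rfl

lemma prodAlong_succ (h : WreathProduct G n) (i : Fin n) (m : ℕ) :
    prodAlong h i (m + 1) = h.left ((h.right ^ m) i) * prodAlong h i m := by
  unfold prodAlong
  rw [List.range_succ, List.map_append, List.reverse_append]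
  simp

lemma cycleProd_eq (h : WreathProduct G n) (i : Fin n) :
    cycleProd h i = prodAlong h i (Function.minimalPeriod (⇑h.right) i) := rfl

lemma prodAlong_apply (h : WreathProduct G n) (i : Fin n) (m : ℕ) :
    prodAlong h (h.right i) m * h.left i = prodAlong h i (m + 1) := by
  induction m with
  | zero => simp [prodAlong_succ]
  | succ m ih =>
      have e : (h.right ^ m) (h.right i) = (h.right ^ (m + 1)) i := by
        rw [← Equiv.Perm.mul_apply, ← pow_succ]
      rw [prodAlong_succ, mul_assoc, ih, prodAlong_succ h i (m + 1), e]

lemma prodAlong_add (h : WreathProduct G n) (i : Fin n) {k : ℕ} (hk : (h.right ^ k) i = i)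
    (m : ℕ) : prodAlong h i (m + k) = prodAlong h i m * prodAlong h i k := by
  induction m with
  | zero => simp
  | succ m ih =>
      have : m + 1 + k = (m + k) + 1 := by omega
      rw [this, prodAlong_succ, ih, prodAlong_succ, mul_assoc]
      congr 2
      rw [pow_add, Equiv.Perm.mul_apply, hk]

lemma cycleProd_apply (h : WreathProduct G n) (i : Fin n) :
    cycleProd h (h.right i) = h.left i * cycleProd h i * (h.left i)⁻¹ := by
  have hper : Function.minimalPeriod (⇑h.right) (h.right i)
      = Function.minimalPeriod (⇑h.right) i := by
    have := WrC.per_pow_apply h.right i 1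
    simpa using this
  set k := Function.minimalPeriod (⇑h.right) i with hkdef
  have h1 : cycleProd h (h.right i) * h.left i = prodAlong h i (k + 1) := by
    rw [cycleProd_eq, hper, prodAlong_apply]
  rw [prodAlong_succ, WrC.pow_per] at h1
  have : cycleProd h (h.right i) = h.left i * prodAlong h i k * (h.left i)⁻¹ := by
    rw [← h1]; group
  rw [this, cycleProd_eq]

lemma isConj_cycleProd_pow (h : WreathProduct G n) (i : Fin n) (m : ℕ) :
    IsConj (cycleProd h i) (cycleProd h ((h.right ^ m) i)) := by
  induction m with
  | zero =>
      simp only [pow_zero, Equiv.Perm.one_apply]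
      exact IsConj.refl _
  | succ m ih =>
      refine ih.trans ?_
      rw [pow_succ', Equiv.Perm.mul_apply, isConj_iff]
      exact ⟨h.left ((h.right ^ m) i), (cycleProd_apply h _).symm⟩

lemma mk_cycleProd_pow (h : WreathProduct G n) (i : Fin n) (m : ℕ) :
    ConjClasses.mk (cycleProd h ((h.right ^ m) i)) = ConjClasses.mk (cycleProd h i) :=
  (ConjClasses.mk_eq_mk_iff_isConj).2 (isConj_cycleProd_pow h i m).symm

lemma telescope (a b : ℕ → G) (m : ℕ) :
    (((List.range m).map fun j => a (j + 1) * b j * (a j)⁻¹).reverse).prod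
      = a m * (((List.range m).map b).reverse).prod * (a 0)⁻¹ := by
  induction m with
  | zero => simp
  | succ m ih =>
      rw [List.range_succ]
      simp only [List.map_append, List.reverse_append, List.map_cons, List.map_nil,
        List.reverse_cons, List.reverse_nil, List.nil_append, List.singleton_append,
        List.prod_cons, List.prod_append]
      rw [ih]
      group

end Products
section Counting
open scoped Classical
open Finset
variable {G : Type*} [Group G] {n : ℕ}

lemma count_wrType (h : WreathProduct G n) (C : ConjClasses G) (k : ℕ) :
    Multiset.count k (wrType h C)
      = (Finset.univ.filter fun i : Fin n =>
          ((∀ m : ℕ, i ≤ (h.right ^ m) i) ∧ ConjClasses.mk (cycleProd h i) = C) ∧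
            Function.minimalPeriod (⇑h.right) i = k).card := by
  have heq : (Finset.univ.filter fun i : Fin n =>
      ((∀ m : ℕ, i ≤ (h.right ^ m) i) ∧ ConjClasses.mk (cycleProd h i) = C) ∧
        k = Function.minimalPeriod (⇑h.right) i)
      = (Finset.univ.filter fun i : Fin n =>
      ((∀ m : ℕ, i ≤ (h.right ^ m) i) ∧ ConjClasses.mk (cycleProd h i) = C) ∧
        Function.minimalPeriod (⇑h.right) i = k) := by
    apply Finset.filter_congr
    intro i _
    exact ⟨fun ⟨h1, h2⟩ => ⟨h1, h2.symm⟩, fun ⟨h1, h2⟩ => ⟨h1, h2.symm⟩⟩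
  rw [wrType, Multiset.count_map, ← Finset.filter_val, Finset.filter_filter, heq]
  rfl

lemma fiber_card (h : WreathProduct G n) (C : ConjClasses G) {k : ℕ} (hk : 0 < k)
    {r : Fin n} (hrep : ∀ m : ℕ, r ≤ (h.right ^ m) r)
    (hC : ConjClasses.mk (cycleProd h r) = C)
    (hper : Function.minimalPeriod (⇑h.right) r = k) :
    ((Finset.univ.filter fun i : Fin n =>
        Function.minimalPeriod (⇑h.right) i = k ∧ ConjClasses.mk (cycleProd h i) = C).filter
      fun i => WrC.repPt h.right i = r).card = k := by
  have hrr : WrC.repPt h.right r = r := (WrC.isRep_iff h.right r).1 hrep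
  have hset : ((Finset.univ.filter fun i : Fin n =>
        Function.minimalPeriod (⇑h.right) i = k ∧ ConjClasses.mk (cycleProd h i) = C).filter
      fun i => WrC.repPt h.right i = r)
      = (Finset.range k).image fun m => (h.right ^ m) r := by
    ext i
    simp only [Finset.mem_filter, Finset.mem_univ, true_and, Finset.mem_image,
      Finset.mem_range]
    constructor
    · rintro ⟨⟨hpi, hci⟩, hri⟩
      refine ⟨WrC.idx h.right i, ?_, ?_⟩
      · have := WrC.idx_lt h.right i
        rw [hpi] at this
        exact this
      · rw [← hri]
        exact WrC.idx_spec h.right i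
    · rintro ⟨m, hm, rfl⟩
      refine ⟨⟨?_, ?_⟩, ?_⟩
      · rw [WrC.per_pow_apply, hper]
      · rw [mk_cycleProd_pow, hC]
      · rw [WrC.repPt_pow, hrr]
  rw [hset]
  rw [Finset.card_image_of_injOn, Finset.card_range]
  intro a ha b hb hab
  simp only [Finset.coe_range, Set.mem_Iio] at ha hb
  have := (WrC.pow_eq_pow_iff_mod h.right r).1 hab
  rw [hper] at this
  rwa [Nat.mod_eq_of_lt ha, Nat.mod_eq_of_lt hb] at this

lemma NN_eq_count_mul (h : WreathProduct G n) (C : ConjClasses G) (k : ℕ) :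
    (Finset.univ.filter fun i : Fin n =>
        Function.minimalPeriod (⇑h.right) i = k ∧ ConjClasses.mk (cycleProd h i) = C).card
      = Multiset.count k (wrType h C) * k := by
  rcases Nat.eq_zero_or_pos k with rfl | hk
  · rw [Nat.mul_zero]
    rw [Finset.card_eq_zero, Finset.filter_eq_empty_iff]
    intro i _
    rintro ⟨h0, -⟩
    exact (WrC.per_pos h.right i).ne' h0
  · rw [count_wrType]
    set T := (Finset.univ.filter fun i : Fin n =>
          ((∀ m : ℕ, i ≤ (h.right ^ m) i) ∧ ConjClasses.mk (cycleProd h i) = C) ∧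
            Function.minimalPeriod (⇑h.right) i = k) with hT
    set S := (Finset.univ.filter fun i : Fin n =>
        Function.minimalPeriod (⇑h.right) i = k ∧ ConjClasses.mk (cycleProd h i) = C) with hS
    have hmaps : ∀ i ∈ S, WrC.repPt h.right i ∈ T := by
      intro i hi
      rw [hS, Finset.mem_filter] at hi
      obtain ⟨-, hpi, hci⟩ := hi
      rw [hT, Finset.mem_filter]
      obtain ⟨m, hm⟩ := WrC.mem_orbitF.1 (WrC.repPt_mem h.right i)
      refine ⟨Finset.mem_univ _, ⟨WrC.isRep_repPt h.right i, ?_⟩, ?_⟩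
      · rw [← hm, mk_cycleProd_pow, hci]
      · rw [WrC.per_repPt, hpi]
    rw [Finset.card_eq_sum_card_fiberwise hmaps]
    rw [Finset.sum_const_nat, Finset.card_def]
    intro r hr
    rw [hT, Finset.mem_filter] at hr
    obtain ⟨-, ⟨hrep, hC⟩, hper⟩ := hr
    exact fiber_card h C hk hrep hC hper

end Counting
lemma perm_inv_apply_self {n : ℕ} (π : Equiv.Perm (Fin n)) (x : Fin n) : π⁻¹ (π x) = x :=
  Equiv.Perm.inv_eq_iff_eq.2 rfl

section Conj
open Finset
variable {G : Type*} [Group G] {n : ℕ}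

lemma wreathHom_apply (σ : Equiv.Perm (Fin n)) (f : Fin n → G) (p : Fin n) :
    (wreathHom G n σ f) p = f (σ⁻¹ p) := rfl

lemma comm_right {c x y : WreathProduct G n} (hc : c * x = y * c) :
    c.right * x.right = y.right * c.right := by
  have := congrArg SemidirectProduct.right hc
  rwa [SemidirectProduct.mul_right, SemidirectProduct.mul_right] at this

lemma comm_left {c x y : WreathProduct G n} (hc : c * x = y * c) (p : Fin n) :
    c.left p * x.left (c.right⁻¹ p) = y.left p * c.left (y.right⁻¹ p) := by
  have h0 := congrArg SemidirectProduct.left hc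
  rw [SemidirectProduct.mul_left, SemidirectProduct.mul_left] at h0
  have h1 := congrFun h0 p
  simpa [wreathHom_apply] using h1

lemma pow_comm_of_comm {σ π τ : Equiv.Perm (Fin n)} (hc : σ * π = τ * σ) (m : ℕ) :
    τ ^ m * σ = σ * π ^ m := by
  induction m with
  | zero => simp
  | succ m ih =>
      rw [pow_succ', mul_assoc, ih, ← mul_assoc, ← hc, pow_succ', mul_assoc]

lemma pow_apply_of_comm {σ π τ : Equiv.Perm (Fin n)} (hc : σ * π = τ * σ) (m : ℕ) (i : Fin n) :
    (τ ^ m) (σ i) = σ ((π ^ m) i) := by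
  have h0 := pow_comm_of_comm hc m
  calc (τ ^ m) (σ i) = (τ ^ m * σ) i := rfl
    _ = (σ * π ^ m) i := by rw [h0]
    _ = σ ((π ^ m) i) := rfl

lemma per_conj {σ π τ : Equiv.Perm (Fin n)} (hc : σ * π = τ * σ) (i : Fin n) :
    Function.minimalPeriod ⇑τ (σ i) = Function.minimalPeriod ⇑π i := by
  rw [Function.minimalPeriod_eq_minimalPeriod_iff]
  intro m
  show (⇑τ)^[m] (σ i) = σ i ↔ (⇑π)^[m] i = i
  rw [Equiv.Perm.iterate_eq_pow, Equiv.Perm.iterate_eq_pow, pow_apply_of_comm hc]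
  exact σ.apply_eq_iff_eq

lemma cycleProd_conj {c x y : WreathProduct G n} (hc : c * x = y * c) (i : Fin n) :
    cycleProd y (c.right (x.right i))
      = c.left (c.right i) * cycleProd x (x.right i) * (c.left (c.right i))⁻¹ := by
  have hcr : c.right * x.right = y.right * c.right := comm_right hc
  set σ := c.right with hσ
  set π := x.right with hπ
  set τ := y.right with hτ
  set h := c.left with hh
  set f := x.left with hf
  set g := y.left with hg
  set k := Function.minimalPeriod ⇑π i with hk
  have hper1 : Function.minimalPeriod ⇑π (π i) = k := by
    have h0 := WrC.per_pow_apply π i 1; simpa using h0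
  have hper2 : Function.minimalPeriod ⇑τ (σ (π i)) = k := by
    rw [per_conj hcr, hper1]
  have hts : ∀ p : Fin n, τ⁻¹ (σ p) = σ (π⁻¹ p) := by
    intro p
    have hmul : τ⁻¹ * σ = σ * π⁻¹ := by
      calc τ⁻¹ * σ = τ⁻¹ * (σ * π) * π⁻¹ := by group
        _ = τ⁻¹ * (τ * σ) * π⁻¹ := by rw [hcr]
        _ = σ * π⁻¹ := by group
    calc τ⁻¹ (σ p) = (τ⁻¹ * σ) p := rfl
      _ = (σ * π⁻¹) p := by rw [hmul]
      _ = σ (π⁻¹ p) := rfl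
  have hterm : ∀ j : ℕ, g ((τ ^ j) (σ (π i)))
      = h (σ ((π ^ (j + 1)) i)) * f ((π ^ (j + 1)) i) * (h (σ ((π ^ j) i)))⁻¹ := by
    intro j
    have h1 : (τ ^ j) (σ (π i)) = σ ((π ^ (j + 1)) i) := by
      rw [pow_apply_of_comm hcr]
      have e : (π ^ j) (π i) = (π ^ (j + 1)) i := by rw [pow_succ]; rfl
      rw [e]
    have h5 : π⁻¹ ((π ^ (j + 1)) i) = (π ^ j) i := by
      have e : (π ^ (j + 1)) i = π ((π ^ j) i) := by rw [pow_succ']; rfl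
      rw [e, perm_inv_apply_self]
    have h2 := comm_left hc (σ ((π ^ (j + 1)) i))
    simp only [← hσ, ← hπ, ← hτ, ← hh, ← hf, ← hg] at h2
    rw [perm_inv_apply_self, hts, h5] at h2
    rw [h1]
    exact (mul_inv_eq_iff_eq_mul.2 h2).symm
  have hlist1 : ((List.range k).map fun j => g ((τ ^ j) (σ (π i))))
      = (List.range k).map fun j =>
          h (σ ((π ^ (j + 1)) i)) * f ((π ^ (j + 1)) i) * (h (σ ((π ^ j) i)))⁻¹ := by
    apply List.map_congr_left
    intro j _
    exact hterm j
  have hcy : cycleProd y (σ (π i))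
      = ((List.range k).map fun j => g ((τ ^ j) (σ (π i)))).reverse.prod := by
    rw [cycleProd, hper2]
  have htel := telescope (fun j => h (σ ((π ^ j) i))) (fun j => f ((π ^ (j + 1)) i)) k
  rw [hcy, hlist1, htel]
  have e1 : (π ^ k) i = i := WrC.pow_per π i
  have e2 : ((List.range k).map fun j => f ((π ^ (j + 1)) i)).reverse.prod
      = cycleProd x (π i) := by
    rw [cycleProd, hper1]
    congr 2
  have e0 : (π ^ 0) i = i := by rw [pow_zero]; rfl
  rw [e1, e2, e0]

end Conj
section Forward
open scoped Classical
open Finset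
variable {G : Type*} [Group G] {n : ℕ}

lemma mk_cycleProd_conj {c x y : WreathProduct G n} (hc : c * x = y * c) (i : Fin n) :
    ConjClasses.mk (cycleProd y (c.right i)) = ConjClasses.mk (cycleProd x i) := by
  have h1 : ConjClasses.mk (cycleProd y (c.right (x.right i)))
      = ConjClasses.mk (cycleProd x (x.right i)) := by
    rw [cycleProd_conj hc i, ConjClasses.mk_eq_mk_iff_isConj, isConj_iff]
    exact ⟨(c.left (c.right i))⁻¹, by group⟩
  have h2 : c.right (x.right i) = y.right (c.right i) := by
    have h0 := pow_apply_of_comm (comm_right hc) 1 i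
    simpa using h0.symm
  rw [h2] at h1
  have h3 : ConjClasses.mk (cycleProd y (y.right (c.right i)))
      = ConjClasses.mk (cycleProd y (c.right i)) := by
    have h0 := mk_cycleProd_pow y (c.right i) 1
    simpa using h0
  have h4 : ConjClasses.mk (cycleProd x (x.right i)) = ConjClasses.mk (cycleProd x i) := by
    have h0 := mk_cycleProd_pow x i 1
    simpa using h0
  rw [← h3, h1, h4]

lemma wrType_count_zero (h : WreathProduct G n) (C : ConjClasses G) :
    Multiset.count 0 (wrType h C) = 0 := by
  rw [count_wrType, Finset.card_eq_zero, Finset.filter_eq_empty_iff]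
  intro i _
  rintro ⟨-, h0⟩
  exact (WrC.per_pos h.right i).ne' h0

lemma wrType_eq_of_comm {c x y : WreathProduct G n} (hc : c * x = y * c) :
    wrType x = wrType y := by
  funext C
  rw [Multiset.ext]
  intro k
  rcases Nat.eq_zero_or_pos k with rfl | hk
  · rw [wrType_count_zero, wrType_count_zero]
  · have hN : (univ.filter fun i : Fin n =>
        Function.minimalPeriod (⇑x.right) i = k ∧ ConjClasses.mk (cycleProd x i) = C).card
        = (univ.filter fun i : Fin n =>
        Function.minimalPeriod (⇑y.right) i = k ∧ ConjClasses.mk (cycleProd y i) = C).card := by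
      apply Finset.card_bij (fun i _ => c.right i)
      · intro i hi
        rw [mem_filter] at hi ⊢
        obtain ⟨-, hp, hC⟩ := hi
        refine ⟨mem_univ _, ?_, ?_⟩
        · rw [per_conj (comm_right hc), hp]
        · rw [mk_cycleProd_conj hc]; exact hC
      · intro a _ b _ hab
        exact c.right.injective hab
      · intro j hj
        rw [mem_filter] at hj
        obtain ⟨-, hp, hC⟩ := hj
        refine ⟨c.right⁻¹ j, ?_, by simp⟩
        rw [mem_filter]
        have h1 : c.right (c.right⁻¹ j) = j := by simp
        refine ⟨mem_univ _, ?_, ?_⟩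
        · have h3 := per_conj (comm_right hc) (c.right⁻¹ j)
          rw [h1] at h3
          rw [← h3]; exact hp
        · have h3 := mk_cycleProd_conj hc (c.right⁻¹ j)
          rw [h1] at h3
          rw [← h3]; exact hC
    have h2 := NN_eq_count_mul x C k
    rw [hN, NN_eq_count_mul y C k] at h2
    exact (Nat.eq_of_mul_eq_mul_right hk h2).symm

lemma wrType_eq_of_isConj {x y : WreathProduct G n} (hxy : IsConj x y) :
    wrType x = wrType y := by
  rw [isConj_iff] at hxy
  obtain ⟨c, hc⟩ := hxy
  exact wrType_eq_of_comm (mul_inv_eq_iff_eq_mul.1 hc)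

end Forward
namespace WrC
variable {n : ℕ}

lemma idx_eq_of {ρ : Equiv.Perm (Fin n)} {q : Fin n} {j : ℕ}
    (hj : j < Function.minimalPeriod ⇑ρ q) (h : (ρ ^ j) (repPt ρ q) = q) : j = idx ρ q := by
  have h1 : (ρ ^ j) (repPt ρ q) = (ρ ^ idx ρ q) (repPt ρ q) := by
    rw [h, idx_spec]
  have h2 := (pow_eq_pow_iff_mod ρ (repPt ρ q)).1 h1
  rw [per_repPt] at h2
  rwa [Nat.mod_eq_of_lt hj, Nat.mod_eq_of_lt (idx_lt ρ q)] at h2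

lemma idx_pow_rep {ρ : Equiv.Perm (Fin n)} {r : Fin n} (hr : repPt ρ r = r) (m : ℕ) :
    idx ρ ((ρ ^ m) r) = m % Function.minimalPeriod ⇑ρ r := by
  have hrep : repPt ρ ((ρ ^ m) r) = r := by rw [repPt_pow, hr]
  have hper : Function.minimalPeriod ⇑ρ ((ρ ^ m) r) = Function.minimalPeriod ⇑ρ r :=
    per_pow_apply ρ r m
  refine (idx_eq_of ?_ ?_).symm
  · rw [hper]
    exact Nat.mod_lt _ (per_pos ρ r)
  · rw [hrep]
    exact (pow_eq_pow_iff_mod ρ r).2 (Nat.mod_mod_of_dvd m dvd_rfl)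

end WrC

section Backward
open scoped Classical
open Finset
variable {G : Type*} [Group G] {n : ℕ}

noncomputable def Tset (h : WreathProduct G n) (v : ℕ × ConjClasses G) : Finset (Fin n) :=
  Finset.univ.filter fun i =>
    ((∀ m : ℕ, i ≤ (h.right ^ m) i) ∧ ConjClasses.mk (cycleProd h i) = v.2) ∧
      Function.minimalPeriod (⇑h.right) i = v.1

lemma mem_Tset {h : WreathProduct G n} {v : ℕ × ConjClasses G} {i : Fin n} :
    i ∈ Tset h v ↔ ((∀ m : ℕ, i ≤ (h.right ^ m) i) ∧ ConjClasses.mk (cycleProd h i) = v.2) ∧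
      Function.minimalPeriod (⇑h.right) i = v.1 := by
  simp [Tset]

lemma Tset_card_eq {x y : WreathProduct G n} (H : wrType x = wrType y) (v : ℕ × ConjClasses G) :
    (Tset x v).card = (Tset y v).card := by
  have h1 := count_wrType x v.2 v.1
  have h2 := count_wrType y v.2 v.1
  rw [H] at h1
  rw [Tset, Tset, ← h1, ← h2]

lemma subtype_equiv_coe_inj {α K : Type*} (S T : K → Finset α)
    (E : ∀ v, {a // a ∈ S v} ≃ {a // a ∈ T v}) {v₁ v₂ : K} (h : v₁ = v₂)
    (u₁ : {a // a ∈ S v₁}) (u₂ : {a // a ∈ S v₂})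
    (he : (E v₁ u₁ : α) = (E v₂ u₂ : α)) : (u₁ : α) = (u₂ : α) := by
  subst h
  exact congrArg Subtype.val ((E v₁).injective (Subtype.ext he))

lemma exists_s {x y : WreathProduct G n} (H : wrType x = wrType y) :
    ∃ s : Fin n → Fin n,
      (∀ r : Fin n, (∀ m : ℕ, r ≤ (x.right ^ m) r) →
        s r ∈ Tset y (Function.minimalPeriod (⇑x.right) r, ConjClasses.mk (cycleProd x r))) ∧
      (∀ r₁ r₂ : Fin n, (∀ m : ℕ, r₁ ≤ (x.right ^ m) r₁) → (∀ m : ℕ, r₂ ≤ (x.right ^ m) r₂) →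
        s r₁ = s r₂ → r₁ = r₂) := by
  set keyx : Fin n → ℕ × ConjClasses G :=
    fun r => (Function.minimalPeriod (⇑x.right) r, ConjClasses.mk (cycleProd x r)) with hkeyx
  have E : ∀ v, {a // a ∈ Tset x v} ≃ {a // a ∈ Tset y v} :=
    fun v => Finset.equivOfCardEq (Tset_card_eq H v)
  have hmemx : ∀ r : Fin n, (∀ m : ℕ, r ≤ (x.right ^ m) r) → r ∈ Tset x (keyx r) := by
    intro r hr
    rw [mem_Tset]
    exact ⟨⟨hr, rfl⟩, rfl⟩
  refine ⟨fun r => if hr : r ∈ Tset x (keyx r) then (E (keyx r) ⟨r, hr⟩ : Fin n) else r, ?_, ?_⟩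
  · intro r hr
    beta_reduce
    rw [dif_pos (hmemx r hr)]
    exact (E (keyx r) ⟨r, hmemx r hr⟩).2
  · intro r₁ r₂ hr₁ hr₂ hs
    beta_reduce at hs
    rw [dif_pos (hmemx r₁ hr₁), dif_pos (hmemx r₂ hr₂)] at hs
    have hk1 := (E (keyx r₁) ⟨r₁, hmemx r₁ hr₁⟩).2
    have hk2 := (E (keyx r₂) ⟨r₂, hmemx r₂ hr₂⟩).2
    rw [mem_Tset] at hk1 hk2
    have hkey : keyx r₁ = keyx r₂ := by
      have e1 : Function.minimalPeriod (⇑y.right) ((E (keyx r₁) ⟨r₁, hmemx r₁ hr₁⟩ : Fin n))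
          = (keyx r₁).1 := hk1.2
      have e2 : ConjClasses.mk (cycleProd y ((E (keyx r₁) ⟨r₁, hmemx r₁ hr₁⟩ : Fin n)))
          = (keyx r₁).2 := hk1.1.2
      rw [hs] at e1 e2
      have := hk2.2
      have := hk2.1.2
      apply Prod.ext
      · rw [← e1, hk2.2]
      · rw [← e2, hk2.1.2]
    exact subtype_equiv_coe_inj (Tset x) (Tset y) E hkey _ _ hs

end Backward
section BackMain
open scoped Classical
variable {G : Type*} [Group G] {n : ℕ}

lemma isConj_of_wrType_eq {x y : WreathProduct G n} (H : wrType x = wrType y) :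
    IsConj x y := by
  obtain ⟨s, hsmem, hsinj⟩ := exists_s H
  set π := x.right with hπ
  set τ := y.right with hτ
  set f := x.left with hf
  set g := y.left with hg
  have hs1 : ∀ r : Fin n, WrC.repPt π r = r → WrC.repPt τ (s r) = s r := by
    intro r hrr
    have h0 := (mem_Tset.1 (hsmem r ((WrC.isRep_iff π r).2 hrr))).1.1
    exact (WrC.isRep_iff τ (s r)).1 h0
  have hs2 : ∀ r : Fin n, WrC.repPt π r = r →
      Function.minimalPeriod ⇑τ (s r) = Function.minimalPeriod ⇑π r :=
    fun r hrr => (mem_Tset.1 (hsmem r ((WrC.isRep_iff π r).2 hrr))).2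
  have hs3 : ∀ r : Fin n, WrC.repPt π r = r →
      ConjClasses.mk (cycleProd y (s r)) = ConjClasses.mk (cycleProd x r) :=
    fun r hrr => (mem_Tset.1 (hsmem r ((WrC.isRep_iff π r).2 hrr))).1.2
  have hsinj' : ∀ r₁ r₂ : Fin n, WrC.repPt π r₁ = r₁ → WrC.repPt π r₂ = r₂ →
      s r₁ = s r₂ → r₁ = r₂ :=
    fun r₁ r₂ h1 h2 => hsinj r₁ r₂ ((WrC.isRep_iff π r₁).2 h1) ((WrC.isRep_iff π r₂).2 h2)
  set F : Fin n → Fin n := fun q => (τ ^ WrC.idx π q) (s (WrC.repPt π q)) with hF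
  have hFpow' : ∀ r : Fin n, WrC.repPt π r = r → ∀ m : ℕ,
      F ((π ^ m) r) = (τ ^ m) (s r) := by
    intro r hrr m
    show (τ ^ WrC.idx π ((π ^ m) r)) (s (WrC.repPt π ((π ^ m) r))) = (τ ^ m) (s r)
    rw [WrC.repPt_pow, hrr, WrC.idx_pow_rep hrr]
    apply (WrC.pow_eq_pow_iff_mod τ (s r)).2
    rw [hs2 r hrr]
    exact Nat.mod_mod_of_dvd m dvd_rfl
  have hreprep : ∀ q : Fin n, WrC.repPt π (WrC.repPt π q) = WrC.repPt π q :=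
    fun q => WrC.repPt_eq_of_mem (WrC.repPt_mem π q)
  have hFinj : Function.Injective F := by
    intro p q hpq
    have hrp := hreprep p
    have hrq := hreprep q
    have h1 : WrC.repPt τ (F p) = s (WrC.repPt π p) := by
      show WrC.repPt τ ((τ ^ WrC.idx π p) (s (WrC.repPt π p))) = s (WrC.repPt π p)
      rw [WrC.repPt_pow, hs1 _ hrp]
    have h2 : WrC.repPt τ (F q) = s (WrC.repPt π q) := by
      show WrC.repPt τ ((τ ^ WrC.idx π q) (s (WrC.repPt π q))) = s (WrC.repPt π q)
      rw [WrC.repPt_pow, hs1 _ hrq]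
    have hreq : s (WrC.repPt π p) = s (WrC.repPt π q) := by rw [← h1, ← h2, hpq]
    have hrepeq : WrC.repPt π p = WrC.repPt π q := hsinj' _ _ hrp hrq hreq
    have h3 : (τ ^ WrC.idx π p) (s (WrC.repPt π p)) = (τ ^ WrC.idx π q) (s (WrC.repPt π p)) := by
      conv_rhs => rw [hrepeq]
      exact hpq
    have h4 := (WrC.pow_eq_pow_iff_mod τ (s (WrC.repPt π p))).1 h3
    rw [hs2 _ hrp, WrC.per_repPt] at h4
    have hlt1 := WrC.idx_lt π p
    have hlt2 := WrC.idx_lt π q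
    have hpq2 : Function.minimalPeriod ⇑π q = Function.minimalPeriod ⇑π p := by
      rw [← WrC.per_repPt π q, ← hrepeq, WrC.per_repPt]
    rw [Nat.mod_eq_of_lt hlt1, Nat.mod_eq_of_lt (hpq2 ▸ hlt2)] at h4
    calc p = (π ^ WrC.idx π p) (WrC.repPt π p) := (WrC.idx_spec π p).symm
      _ = (π ^ WrC.idx π q) (WrC.repPt π q) := by rw [h4, hrepeq]
      _ = q := WrC.idx_spec π q
  obtain ⟨σ, hσ⟩ : ∃ σ : Equiv.Perm (Fin n), ∀ q, σ q = F q :=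
    ⟨Equiv.ofBijective F (Finite.injective_iff_bijective.1 hFinj), fun q => rfl⟩
  have hcomm : σ * π = τ * σ := by
    apply Equiv.ext
    intro q
    show σ (π q) = τ (σ q)
    have hrr := hreprep q
    have hq : (π ^ WrC.idx π q) (WrC.repPt π q) = q := WrC.idx_spec π q
    have h1 : (π ^ (WrC.idx π q + 1)) (WrC.repPt π q) = π q := by
      rw [pow_succ']
      show π ((π ^ WrC.idx π q) (WrC.repPt π q)) = π q
      rw [hq]
    calc σ (π q) = F ((π ^ (WrC.idx π q + 1)) (WrC.repPt π q)) := by rw [hσ, h1]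
      _ = (τ ^ (WrC.idx π q + 1)) (s (WrC.repPt π q)) := hFpow' _ hrr _
      _ = τ ((τ ^ WrC.idx π q) (s (WrC.repPt π q))) := by rw [pow_succ']; rfl
      _ = τ (F ((π ^ WrC.idx π q) (WrC.repPt π q))) := by rw [hFpow' _ hrr]
      _ = τ (σ q) := by rw [hq, ← hσ]
  have hw' : ∀ r : Fin n, ∃ u : G,
      WrC.repPt π r = r → u * cycleProd x r * u⁻¹ = cycleProd y (s r) := by
    intro r
    by_cases hrr : WrC.repPt π r = r
    · have h0 := hs3 r hrr
      rw [ConjClasses.mk_eq_mk_iff_isConj] at h0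
      obtain ⟨u, hu⟩ := isConj_iff.1 h0.symm
      exact ⟨u, fun _ => hu⟩
    · exact ⟨1, fun h0 => absurd h0 hrr⟩
  choose w hwspec using hw'
  set A : Fin n → ℕ → G :=
    fun r m => prodAlong y (s r) (m + 1) * w r * (prodAlong x r (m + 1))⁻¹ with hA
  set h : Fin n → G := fun p => A (WrC.repPt π (σ.symm p)) (WrC.idx τ p) with hh
  have hAadd : ∀ r : Fin n, WrC.repPt π r = r → ∀ m : ℕ,
      A r (m + Function.minimalPeriod ⇑π r) = A r m := by
    intro r hrr m
    have hrx : (π ^ Function.minimalPeriod ⇑π r) r = r := WrC.pow_per π r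
    have hkτ := hs2 r hrr
    have hry : (τ ^ Function.minimalPeriod ⇑π r) (s r) = s r := by
      rw [← hkτ]; exact WrC.pow_per τ (s r)
    show prodAlong y (s r) (m + Function.minimalPeriod ⇑π r + 1) * w r
        * (prodAlong x r (m + Function.minimalPeriod ⇑π r + 1))⁻¹
      = prodAlong y (s r) (m + 1) * w r * (prodAlong x r (m + 1))⁻¹
    have e1 : m + Function.minimalPeriod ⇑π r + 1 = (m + 1) + Function.minimalPeriod ⇑π r := by
      omega
    rw [e1, prodAlong_add x r hrx, prodAlong_add y (s r) hry]
    have ePF : prodAlong x r (Function.minimalPeriod ⇑π r) = cycleProd x r :=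
      (cycleProd_eq x r).symm
    have ePG : prodAlong y (s r) (Function.minimalPeriod ⇑π r) = cycleProd y (s r) := by
      rw [← hkτ]; exact (cycleProd_eq y (s r)).symm
    rw [ePF, ePG, ← hwspec r hrr]
    group
  have hAmod : ∀ r : Fin n, WrC.repPt π r = r → ∀ m : ℕ,
      A r m = A r (m % Function.minimalPeriod ⇑π r) := by
    intro r hrr m
    induction m using Nat.strong_induction_on with
    | _ m ih =>
      by_cases hm : m < Function.minimalPeriod ⇑π r
      · rw [Nat.mod_eq_of_lt hm]
      · have hkpos := WrC.per_pos π r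
        have e1 : m - Function.minimalPeriod ⇑π r + Function.minimalPeriod ⇑π r = m := by omega
        have h2 := hAadd r hrr (m - Function.minimalPeriod ⇑π r)
        rw [e1] at h2
        rw [h2, ih _ (by omega)]
        congr 1
        conv_rhs => rw [← e1]
        rw [Nat.add_mod_right]
  have hhval : ∀ r : Fin n, WrC.repPt π r = r → ∀ m : ℕ, h ((τ ^ m) (s r)) = A r m := by
    intro r hrr m
    have hkτ := hs2 r hrr
    have hsr := hs1 r hrr
    have hσs : σ.symm ((τ ^ m) (s r)) = (π ^ (m % Function.minimalPeriod ⇑π r)) r := by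
      rw [Equiv.symm_apply_eq, hσ, hFpow' r hrr]
      refine (WrC.pow_eq_pow_iff_mod τ (s r)).2 ?_
      rw [hkτ]
      exact (Nat.mod_mod_of_dvd m dvd_rfl).symm
    have hrepτ : WrC.repPt π (σ.symm ((τ ^ m) (s r))) = r := by
      rw [hσs, WrC.repPt_pow, hrr]
    have hidxτ : WrC.idx τ ((τ ^ m) (s r)) = m % Function.minimalPeriod ⇑π r := by
      rw [WrC.idx_pow_rep hsr, hkτ]
    show A (WrC.repPt π (σ.symm ((τ ^ m) (s r)))) (WrC.idx τ ((τ ^ m) (s r))) = A r m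
    rw [hrepτ, hidxτ, ← hAmod r hrr m]
  have hI : ∀ r : Fin n, WrC.repPt π r = r → ∀ m : ℕ,
      A r (m + 1) * f ((π ^ (m + 1)) r) = g ((τ ^ (m + 1)) (s r)) * A r m := by
    intro r hrr m
    show prodAlong y (s r) (m + 1 + 1) * w r * (prodAlong x r (m + 1 + 1))⁻¹ * f ((π ^ (m + 1)) r)
      = g ((τ ^ (m + 1)) (s r)) * (prodAlong y (s r) (m + 1) * w r * (prodAlong x r (m + 1))⁻¹)
    rw [prodAlong_succ x r (m + 1), prodAlong_succ y (s r) (m + 1)]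
    simp only [hf, hg, hπ, hτ]
    group
  set c : WreathProduct G n := ⟨h, σ⟩ with hc
  have hmain : c * x = y * c := by
    apply SemidirectProduct.ext
    · show h * (wreathHom G n σ) f = g * (wreathHom G n τ) h
      funext p
      obtain ⟨q, rfl⟩ : ∃ q, σ q = p := ⟨σ.symm p, by simp⟩
      show h (σ q) * ((wreathHom G n σ) f) (σ q) = g (σ q) * ((wreathHom G n τ) h) (σ q)
      rw [wreathHom_apply, wreathHom_apply, perm_inv_apply_self]
      set r := WrC.repPt π q with hr
      have hrr := hreprep q
      have hq : (π ^ WrC.idx π q) r = q := WrC.idx_spec π q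
      set m := WrC.idx π q with hm
      set k := Function.minimalPeriod ⇑π r with hkdef
      have hkpos : 0 < k := WrC.per_pos π r
      have hrx : (π ^ k) r = r := WrC.pow_per π r
      have hkτ : Function.minimalPeriod ⇑τ (s r) = k := hs2 r hrr
      have hry : (τ ^ k) (s r) = s r := by rw [← hkτ]; exact WrC.pow_per τ (s r)
      have hqM : (π ^ (m + k)) r = q := by
        rw [pow_add, Equiv.Perm.mul_apply, hrx, hq]
      have hσq : σ q = (τ ^ (m + k)) (s r) := by
        rw [hσ, ← hqM, hFpow' r hrr]
      have hMsucc : m + k = (m + k - 1) + 1 := by omega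
      have hτinv : τ⁻¹ (σ q) = (τ ^ (m + k - 1)) (s r) := by
        rw [hσq, hMsucc, pow_succ']
        show τ⁻¹ (τ ((τ ^ (m + k - 1)) (s r))) = (τ ^ (m + k - 1)) (s r)
        exact perm_inv_apply_self τ _
      rw [hτinv, hσq, hhval r hrr, hhval r hrr, ← hqM, hMsucc]
      exact hI r hrr (m + k - 1)
    · show σ * π = τ * σ
      exact hcomm
  exact isConj_iff.2 ⟨c, by rw [hmain]; group⟩

end BackMain

/-- Two elements of the wreath product `G ≀ Sₙ` are conjugate if and only if
they have the same type, i.e. for every conjugacy class `C` of `G` the multiset of lengths of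
cycles (of the permutation part) whose cycle product lies in `C` is the same for both. -/
theorem conj_iff_same_type (G : Type) [Group G] [Fintype G] (n : ℕ) (hn : 0 < n)
    (x y : WreathProduct G n) :
    IsConj x y ↔ wrType x = wrType y :=
  ⟨wrType_eq_of_isConj, isConj_of_wrType_eq⟩
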